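/- Under the same hypotheses (wavelet-type decay $|\phi_k(x)| \le c\,2^{m/2}\xi(2^m(x-t_k))$ with $\xi(x)=(1+|x|)^{-(1+\delta)}$, $0<\delta<1$), for any interval $I = [a,b) \subset [0,1)$ and any $x \in [0,1] \setminus 2I$ (where $2I$ is the interval with the same center as $I$ and twice its length), one has $|\Delta\Phi_m(\mathbf{1}_I)(x)| \le C\, 2^m |I|\, \xi(2^m(x-a))$, with $C$ depending only on $c$ and $\delta$. -/

import Mathlib

open MeasureTheory Set

noncomputable section

/-- The decay profile `ξ(x) = (1+|x|)^{-(1+δ)}`. -/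
def xi (δ x : ℝ) : ℝ := (1 + |x|) ^ (-(1 + δ))

/-- The center `t_k = (2j-1)/2^m` for `k = 2^{m-1} + j`, `1 ≤ j ≤ 2^{m-1}`. -/
def tpt (m k : ℕ) : ℝ := (2 * ((k : ℝ) - 2 ^ (m - 1)) - 1) / 2 ^ m

/-- Decay bound of a wavelet-type system: for `2^{m-1} < k ≤ 2^m`,
`|φ_k(x)| ≤ c 2^{m/2} ξ(2^m (x - t_k))`. -/
def WaveletDecay (δ c : ℝ) (φ : ℕ → ℝ → ℝ) : Prop :=
  ∀ m : ℕ, 1 ≤ m → ∀ k ∈ Finset.Ioc (2 ^ (m - 1)) (2 ^ m), ∀ x ∈ Set.Icc (0:ℝ) 1,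
    |φ k x| ≤ c * 2 ^ ((m : ℝ) / 2) * xi δ (2 ^ m * (x - tpt m k))

/-- Hölder bound of a wavelet-type system: for `2^{m-1} < k ≤ 2^m` and
`|t - t'| ≤ 2^{-m}`, `|φ_k(t) - φ_k(t')| ≤ c 2^{m/2} (2^m |t-t'|)^α ξ(2^m (t - t_k))`. -/
def WaveletHolder (δ α c : ℝ) (φ : ℕ → ℝ → ℝ) : Prop :=
  ∀ m : ℕ, 1 ≤ m → ∀ k ∈ Finset.Ioc (2 ^ (m - 1)) (2 ^ m),
    ∀ t ∈ Set.Icc (0:ℝ) 1, ∀ t' ∈ Set.Icc (0:ℝ) 1, |t - t'| ≤ ((2 : ℝ) ^ m)⁻¹ →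
      |φ k t - φ k t'| ≤
        c * 2 ^ ((m : ℝ) / 2) * (2 ^ m * |t - t'|) ^ α * xi δ (2 ^ m * (t - tpt m k))

/-- A wavelet-type system: measurable, orthonormal on `(0,1)`, mean zero, with the
decay and Hölder bounds. -/
def IsWaveletSystem (δ α c : ℝ) (φ : ℕ → ℝ → ℝ) : Prop :=
  (∀ k, Measurable (φ k)) ∧
  (∀ j k : ℕ, 1 ≤ j → 1 ≤ k →
    (∫ x in Set.Ioo (0:ℝ) 1, φ j x * φ k x) = if j = k then 1 else 0) ∧
  (∀ k : ℕ, 1 ≤ k → (∫ x in Set.Ioo (0:ℝ) 1, φ k x) = 0) ∧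
  WaveletDecay δ c φ ∧ WaveletHolder δ α c φ

/-! ### Auxiliary lemmas on `xi` -/

lemma xi_pos (δ x : ℝ) : 0 < xi δ x := Real.rpow_pos_of_pos (by positivity) _

lemma xi_le_one (δ : ℝ) (hδ : 0 ≤ δ) (x : ℝ) : xi δ x ≤ 1 :=
  Real.rpow_le_one_of_one_le_of_nonpos (by simp [abs_nonneg]) (by linarith)

lemma xi_even (δ x : ℝ) : xi δ (-x) = xi δ x := by simp [xi]

/-- if `1+|x| ≤ K (1+|y|)` then `xi δ y ≤ K^2 xi δ x` -/
lemma xi_scale (δ : ℝ) (hδ0 : 0 ≤ δ) (hδ1 : δ ≤ 1) {K x y : ℝ} (hK : 1 ≤ K)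
    (h : 1 + |x| ≤ K * (1 + |y|)) : xi δ y ≤ K ^ 2 * xi δ x := by
  have hy : (0:ℝ) < 1 + |y| := by positivity
  have h1 : (K * (1 + |y|)) ^ (-(1+δ)) ≤ xi δ x :=
    Real.rpow_le_rpow_of_nonpos (by positivity) h (by linarith)
  have h2 : (K * (1 + |y|)) ^ (-(1+δ)) = K ^ (-(1+δ)) * xi δ y :=
    Real.mul_rpow (by linarith) (by linarith)
  have h3 : K ^ (1+δ) ≤ K ^ (2:ℝ) := Real.rpow_le_rpow_of_exponent_le hK (by linarith)
  have h4 : K ^ (2:ℝ) = K ^ 2 := by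
    rw [show (2:ℝ) = ((2:ℕ):ℝ) by norm_num, Real.rpow_natCast]
  have hKpos : (0:ℝ) < K := by linarith
  have h5 : xi δ y = K ^ (1+δ) * (K ^ (-(1+δ)) * xi δ y) := by
    rw [← mul_assoc, ← Real.rpow_add hKpos, show 1+δ+(-(1+δ)) = 0 by ring,
      Real.rpow_zero, one_mul]
  rw [h5]
  calc K ^ (1+δ) * (K ^ (-(1+δ)) * xi δ y) ≤ K ^ (1+δ) * xi δ x := by
        apply mul_le_mul_of_nonneg_left (h2 ▸ h1) (Real.rpow_nonneg hKpos.le _)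
    _ ≤ K ^ 2 * xi δ x := by
        apply mul_le_mul_of_nonneg_right (h4 ▸ h3) (xi_pos δ x).le

lemma xi_split (δ : ℝ) (hδ0 : 0 ≤ δ) (hδ1 : δ ≤ 1) (u w : ℝ) :
    xi δ u * xi δ w ≤ 4 * (xi δ (u + w) * (xi δ u + xi δ w)) := by
  rcases le_total |u| |w| with h | h
  · have key : xi δ w ≤ 4 * xi δ (u + w) := by
      have := xi_scale δ hδ0 hδ1 (K := 2) (x := u + w) (y := w) one_le_two
        (by have := abs_add_le u w; linarith)
      linarith [this]
    nlinarith [xi_pos δ u, xi_pos δ w, xi_pos δ (u+w), xi_le_one δ hδ0 u]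
  · have key : xi δ u ≤ 4 * xi δ (u + w) := by
      have := xi_scale δ hδ0 hδ1 (K := 2) (x := u + w) (y := u) one_le_two
        (by have := abs_add_le u w; linarith)
      linarith [this]
    nlinarith [xi_pos δ u, xi_pos δ w, xi_pos δ (u+w), xi_le_one δ hδ0 w]

/-! ### The summation constant -/

def Sconst (δ : ℝ) : ℝ := ∑' n : ℕ, (1 + 2*(n:ℝ)) ^ (-(1+δ))

lemma summable_S (δ : ℝ) (hδ : 0 < δ) :
    Summable (fun n : ℕ => (1 + 2*(n:ℝ)) ^ (-(1+δ))) := by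
  have h0 : Summable (fun n : ℕ => ((n:ℝ)) ^ (-(1+δ))) :=
    Real.summable_nat_rpow.2 (by linarith)
  have h1 : Summable (fun n : ℕ => (((n+1:ℕ)):ℝ) ^ (-(1+δ))) :=
    (summable_nat_add_iff 1).2 h0
  apply Summable.of_nonneg_of_le (fun n => Real.rpow_nonneg (by positivity) _) ?_ h1
  intro n
  apply Real.rpow_le_rpow_of_nonpos (by positivity) ?_ (by linarith)
  push_cast; linarith [Nat.cast_nonneg (α := ℝ) n]

lemma Sconst_pos (δ : ℝ) (hδ : 0 < δ) : 0 < Sconst δ :=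
  Summable.tsum_pos (summable_S δ hδ) (fun n => Real.rpow_nonneg (by positivity) _) 0
    (Real.rpow_pos_of_pos (by norm_num) _)

lemma sum_xi_le (δ : ℝ) (hδ : 0 < δ) (z : ℝ) (F : Finset ℕ) :
    ∑ k ∈ F, xi δ (z - 2*(k:ℝ)) ≤ 2 * Sconst δ := by
  classical
  set w : ℝ := z / 2 with hw
  set g : ℕ → ℝ := fun n => (1 + 2*(n:ℝ)) ^ (-(1+δ)) with hgdef
  set f : ℕ → ℕ := fun k => ⌊|w - (k:ℝ)|⌋₊ with hfdef
  have hgnonneg : ∀ n, 0 ≤ g n := fun n => Real.rpow_nonneg (by positivity) _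
  have hterm : ∀ k : ℕ, xi δ (z - 2*(k:ℝ)) ≤ g (f k) := by
    intro k
    have h1 : (f k : ℝ) ≤ |w - (k:ℝ)| := Nat.floor_le (abs_nonneg _)
    have h2 : |z - 2*(k:ℝ)| = 2 * |w - (k:ℝ)| := by
      rw [show z - 2*(k:ℝ) = 2*(w - (k:ℝ)) by rw [hw]; ring, abs_mul]
      norm_num
    exact Real.rpow_le_rpow_of_nonpos (by positivity) (by rw [h2]; linarith) (by linarith)
  have hcard : ∀ n : ℕ, (F.filter (fun k => f k = n)).card ≤ 2 := by
    intro n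
    have hsub : F.filter (fun k => f k = n) ⊆
        {Int.toNat ⌊w - (n:ℝ)⌋, Int.toNat ⌈w + (n:ℝ)⌉} := by
      intro k hk
      obtain ⟨-, hfk⟩ := Finset.mem_filter.1 hk
      obtain ⟨hn1, hn2⟩ := (Nat.floor_eq_iff (abs_nonneg (w - (k:ℝ)))).1 hfk
      rw [abs_lt] at hn2
      rcases le_abs.1 hn1 with h | h
      · have : ⌊w - (n:ℝ)⌋ = (k:ℤ) := by
          rw [Int.floor_eq_iff]
          constructor
          · push_cast; linarith [hn2.1]
          · push_cast; linarith [h]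
        simp only [Finset.mem_insert, Finset.mem_singleton]
        left; rw [this]; simp
      · have : ⌈w + (n:ℝ)⌉ = (k:ℤ) := by
          rw [Int.ceil_eq_iff]
          constructor
          · push_cast; linarith [hn2.2]
          · push_cast; linarith [h]
        simp only [Finset.mem_insert, Finset.mem_singleton]
        right; rw [this]; simp
    calc (F.filter (fun k => f k = n)).card ≤ _ := Finset.card_le_card hsub
      _ ≤ 2 := by
        apply (Finset.card_insert_le _ _).trans
        simp
  calc ∑ k ∈ F, xi δ (z - 2*(k:ℝ)) ≤ ∑ k ∈ F, g (f k) :=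
        Finset.sum_le_sum (fun k _ => hterm k)
    _ = ∑ n ∈ F.image f, ∑ k ∈ F.filter (fun k => f k = n), g (f k) :=
        (Finset.sum_fiberwise_of_maps_to (fun k hk => Finset.mem_image_of_mem f hk) _).symm
    _ ≤ ∑ n ∈ F.image f, 2 * g n := by
        apply Finset.sum_le_sum
        intro n hn
        have heq : ∑ k ∈ F.filter (fun k => f k = n), g (f k)
            = ∑ k ∈ F.filter (fun k => f k = n), g n := by
          apply Finset.sum_congr rfl
          intro k hk
          rw [(Finset.mem_filter.1 hk).2]
        rw [heq, Finset.sum_const, nsmul_eq_mul]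
        exact mul_le_mul_of_nonneg_right (by exact_mod_cast hcard n) (hgnonneg n)
    _ = 2 * ∑ n ∈ F.image f, g n := by rw [Finset.mul_sum]
    _ ≤ 2 * Sconst δ := by
        have : ∑ n ∈ F.image f, g n ≤ Sconst δ :=
          Summable.sum_le_tsum (F.image f) (fun n _ => hgnonneg n) (summable_S δ hδ)
        linarith

/-- Away from the doubled interval `2I`, a wavelet block applied to `𝟙_I` decays like
`2^m |I| ξ(2^m (x - a))`. -/
theorem stmt7 (δ c : ℝ) (hδ0 : 0 < δ) (hδ1 : δ < 1) (hc : 0 < c) :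
    ∃ C : ℝ, 0 < C ∧
      ∀ α : ℝ, 0 < α → α ≤ 1 →
        ∀ φ : ℕ → ℝ → ℝ, IsWaveletSystem δ α c φ →
          ∀ m : ℕ, 1 ≤ m → ∀ a b : ℝ, 0 ≤ a → a < b → b ≤ 1 →
            ∀ x ∈ Set.Icc (0:ℝ) 1, b - a < |x - (a + b) / 2| →
              |∑ k ∈ Finset.Ioc (2 ^ (m - 1)) (2 ^ m),
                  (∫ t in Set.Ioo a b, φ k t) * φ k x| ≤
                C * 2 ^ m * (b - a) * xi δ (2 ^ m * (x - a)) := by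
  refine ⟨144 * c^2 * Sconst δ, by nlinarith [Sconst_pos δ hδ0, sq_nonneg c, mul_pos hc hc], ?_⟩
  intro α hα0 hα1 φ hφ m hm a b ha hab hb x hx hfar
  have hS := Sconst_pos δ hδ0
  obtain ⟨hmeas, -, -, hdecay, -⟩ := hφ
  set F : Finset ℕ := Finset.Ioc (2 ^ (m - 1)) (2 ^ m) with hF
  set M : ℝ := (2:ℝ) ^ m with hM
  have hMpos : (0:ℝ) < M := by positivity
  have h2m : M = 2 * 2 ^ (m - 1) := by
    rw [hM, ← pow_succ']
    congr 1
    omega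
  have htpt : ∀ k : ℕ, M * tpt m k = 2*(k:ℝ) - M - 1 := by
    intro k
    rw [tpt, hM, mul_comm, div_mul_cancel₀ _ (by positivity : ((2:ℝ)^m) ≠ 0), ← hM, h2m]
    ring
  -- the two sum bounds
  have hsum : ∀ y : ℝ, ∑ k ∈ F, xi δ (M * (y - tpt m k)) ≤ 2 * Sconst δ := by
    intro y
    have : ∀ k : ℕ, M * (y - tpt m k) = (M*y + M + 1) - 2*(k:ℝ) := by
      intro k
      have := htpt k
      nlinarith [htpt k]
    calc ∑ k ∈ F, xi δ (M * (y - tpt m k))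
        = ∑ k ∈ F, xi δ ((M*y + M + 1) - 2*(k:ℝ)) := by
          apply Finset.sum_congr rfl
          intro k _
          rw [this k]
      _ ≤ 2 * Sconst δ := sum_xi_le δ hδ0 _ F
  -- step 1 : far from interval
  have hfar9 : ∀ t, a ≤ t → t ≤ b → xi δ (M * (x - t)) ≤ 9 * xi δ (M * (x - a)) := by
    intro t ht1 ht2
    have htri : |x - (a+b)/2| ≤ |x - t| + |t - (a+b)/2| := abs_sub_le x t ((a+b)/2)
    have hmid : |t - (a+b)/2| ≤ (b-a)/2 := abs_le.2 ⟨by linarith, by linarith⟩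
    have h1 : (b-a)/2 < |x - t| := by linarith
    have h2 : |x - a| ≤ 3 * |x - t| := by
      have : |x - a| ≤ |x - t| + |t - a| := abs_sub_le x t a
      have hta : |t - a| = t - a := abs_of_nonneg (by linarith)
      linarith [this, hta.le, hta.ge]
    have hMa : |M * (x - a)| = M * |x - a| := by
      rw [abs_mul, abs_of_pos hMpos]
    have hMt : |M * (x - t)| = M * |x - t| := by
      rw [abs_mul, abs_of_pos hMpos]
    have := xi_scale δ hδ0.le hδ1.le (K := 3) (x := M * (x - a)) (y := M * (x - t))
      (by norm_num)
      (by rw [hMa, hMt]; nlinarith [abs_nonneg (x - t), hMpos])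
    linarith [this]
  -- continuity and integrability of the profiles
  have hcont : ∀ y0 : ℝ, Continuous (fun t : ℝ => xi δ (M * (t - y0))) := by
    intro y0
    apply Continuous.rpow_const
    · exact continuous_const.add (continuous_abs.comp (by continuity))
    · intro t; left; positivity
  have hinteg : ∀ y0 : ℝ, IntegrableOn (fun t : ℝ => xi δ (M * (t - y0))) (Ioo a b) :=
    fun y0 => ((hcont y0).continuousOn.integrableOn_compact isCompact_Icc).mono_set
      Ioo_subset_Icc_self
  -- per-k bounds
  set A : ℕ → ℝ := fun k => ∫ t in Ioo a b, xi δ (M * (t - tpt m k)) with hA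
  have hAnonneg : ∀ k, 0 ≤ A k := by
    intro k
    apply integral_nonneg
    intro t
    exact (xi_pos δ _).le
  have h2half : (2:ℝ)^((m:ℝ)/2) * 2^((m:ℝ)/2) = M := by
    rw [← Real.rpow_add two_pos, hM, ← Real.rpow_natCast 2 m]
    norm_num
  have hperk : ∀ k ∈ F, |(∫ t in Ioo a b, φ k t) * φ k x|
      ≤ c^2 * M * (xi δ (M * (x - tpt m k)) * A k) := by
    intro k hk
    have hφx : |φ k x| ≤ c * 2 ^ ((m:ℝ)/2) * xi δ (M * (x - tpt m k)) :=
      hdecay m hm k hk x hx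
    have hIk : |∫ t in Ioo a b, φ k t| ≤ c * 2 ^ ((m:ℝ)/2) * A k := by
      have hbound : |∫ t in Ioo a b, φ k t|
          ≤ ∫ t in Ioo a b, |φ k t| := by
        simpa using norm_integral_le_integral_norm (μ := volume.restrict (Ioo a b)) (φ k)
      have hmono : ∫ t in Ioo a b, |φ k t|
          ≤ ∫ t in Ioo a b, c * 2 ^ ((m:ℝ)/2) * xi δ (M * (t - tpt m k)) := by
        apply integral_mono_of_nonneg
        · exact Filter.Eventually.of_forall (fun t => abs_nonneg _)
        · exact (hinteg (tpt m k)).const_mul _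
        · filter_upwards [ae_restrict_mem measurableSet_Ioo] with t ht
          exact hdecay m hm k hk t ⟨by linarith [ht.1], by linarith [ht.2]⟩
      have hpull : ∫ t in Ioo a b, c * 2 ^ ((m:ℝ)/2) * xi δ (M * (t - tpt m k))
          = c * 2 ^ ((m:ℝ)/2) * A k := by
        rw [hA]
        exact integral_const_mul _ _
      linarith [hbound, hmono, hpull.le, hpull.ge]
    rw [abs_mul]
    have hc2 : (0:ℝ) ≤ c * 2 ^ ((m:ℝ)/2) := by positivity
    calc |∫ t in Ioo a b, φ k t| * |φ k x|
        ≤ (c * 2 ^ ((m:ℝ)/2) * A k) * (c * 2 ^ ((m:ℝ)/2) * xi δ (M * (x - tpt m k))) := by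
          apply mul_le_mul hIk hφx (abs_nonneg _)
          exact mul_nonneg hc2 (hAnonneg k)
      _ = c^2 * M * (xi δ (M * (x - tpt m k)) * A k) := by
          rw [← h2half]; ring
  -- interchange sum and integral, and bound pointwise
  have hsumA : ∑ k ∈ F, xi δ (M * (x - tpt m k)) * A k
      ≤ (b - a) * (144 * Sconst δ * xi δ (M * (x - a))) := by
    have hinteg' : ∀ k ∈ F, IntegrableOn
        (fun t => xi δ (M * (x - tpt m k)) * xi δ (M * (t - tpt m k))) (Ioo a b) :=
      fun k _ => (hinteg (tpt m k)).const_mul _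
    have hswap : ∑ k ∈ F, xi δ (M * (x - tpt m k)) * A k
        = ∫ t in Ioo a b, ∑ k ∈ F, xi δ (M * (x - tpt m k)) * xi δ (M * (t - tpt m k)) := by
      rw [integral_finset_sum F hinteg']
      apply Finset.sum_congr rfl
      intro k _
      rw [hA, integral_const_mul]
    rw [hswap]
    have hptwise : ∀ t ∈ Ioo a b,
        ∑ k ∈ F, xi δ (M * (x - tpt m k)) * xi δ (M * (t - tpt m k))
          ≤ 144 * Sconst δ * xi δ (M * (x - a)) := by
      intro t ht
      have h9 := hfar9 t ht.1.le ht.2.le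
      have hxiV := xi_pos δ (M * (x - a))
      calc ∑ k ∈ F, xi δ (M * (x - tpt m k)) * xi δ (M * (t - tpt m k))
          ≤ ∑ k ∈ F, 36 * xi δ (M * (x - a)) *
              (xi δ (M * (x - tpt m k)) + xi δ (M * (t - tpt m k))) := by
            apply Finset.sum_le_sum
            intro k _
            have hsplit := xi_split δ hδ0.le hδ1.le (M * (x - tpt m k)) (-(M * (t - tpt m k)))
            rw [xi_even, show M * (x - tpt m k) + -(M * (t - tpt m k)) = M * (x - t) by ring]
              at hsplit
            have hnn : 0 ≤ xi δ (M * (x - tpt m k)) + xi δ (M * (t - tpt m k)) :=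
              add_nonneg (xi_pos δ _).le (xi_pos δ _).le
            nlinarith [hsplit, h9, hnn, xi_pos δ (M * (x - t))]
        _ = 36 * xi δ (M * (x - a)) *
              (∑ k ∈ F, xi δ (M * (x - tpt m k)) + ∑ k ∈ F, xi δ (M * (t - tpt m k))) := by
            rw [← Finset.mul_sum, Finset.sum_add_distrib]
        _ ≤ 36 * xi δ (M * (x - a)) * (2 * Sconst δ + 2 * Sconst δ) := by
            apply mul_le_mul_of_nonneg_left _ (by nlinarith [xi_pos δ (M * (x - a))])
            exact add_le_add (hsum x) (hsum t)
        _ = 144 * Sconst δ * xi δ (M * (x - a)) := by ring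
    calc (∫ t in Ioo a b, ∑ k ∈ F, xi δ (M * (x - tpt m k)) * xi δ (M * (t - tpt m k)))
        ≤ ∫ _t in Ioo a b, 144 * Sconst δ * xi δ (M * (x - a)) := by
          apply setIntegral_mono_on
          · exact integrable_finset_sum F hinteg'
          · exact integrableOn_const (by rw [Real.volume_Ioo]; exact ENNReal.ofReal_ne_top)
          · exact measurableSet_Ioo
          · exact hptwise
      _ = (b - a) * (144 * Sconst δ * xi δ (M * (x - a))) := by
          rw [setIntegral_const, measureReal_def, Real.volume_Ioo, ENNReal.toReal_ofReal (by linarith), smul_eq_mul]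
  -- conclusion
  calc |∑ k ∈ F, (∫ t in Ioo a b, φ k t) * φ k x|
      ≤ ∑ k ∈ F, |(∫ t in Ioo a b, φ k t) * φ k x| := Finset.abs_sum_le_sum_abs _ _
    _ ≤ ∑ k ∈ F, c^2 * M * (xi δ (M * (x - tpt m k)) * A k) :=
        Finset.sum_le_sum hperk
    _ = c^2 * M * ∑ k ∈ F, xi δ (M * (x - tpt m k)) * A k := by
        rw [Finset.mul_sum]
    _ ≤ c^2 * M * ((b - a) * (144 * Sconst δ * xi δ (M * (x - a)))) := by
        apply mul_le_mul_of_nonneg_left hsumA (mul_nonneg (by positivity) hMpos.le)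
    _ = 144 * c^2 * Sconst δ * 2 ^ m * (b - a) * xi δ (2 ^ m * (x - a)) := by
        rw [hM]; ring
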